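/- Let R be a commutative ℤ-algebra which verifies the star assumption. Then the polynomial ring R[X] and the formal power series ring R[[X]] also verify the star assumption. -/

import Mathlib

/-- A commutative `ℤ`-algebra `R` verifies the *star assumption* if, for every infinite set `S`
of prime integers, the intersection `⋂_{p ∈ S} pR` is the zero ideal. -/
def StarAssumption (R : Type*) [CommRing R] : Prop :=
  ∀ S : Set ℕ, (∀ p ∈ S, p.Prime) → S.Infinite → (⨅ p ∈ S, Ideal.span {(p : R)}) = ⊥

lemma ps_C_dvd_iff {R : Type*} [CommRing R] (a : R) (f : PowerSeries R) :
    (PowerSeries.C a) ∣ f ↔ ∀ n, a ∣ PowerSeries.coeff n f := by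
  constructor
  · rintro ⟨g, rfl⟩ n
    exact ⟨PowerSeries.coeff n g, by simp⟩
  · intro h
    choose b hb using h
    exact ⟨PowerSeries.mk b, by ext n; simp [hb n]⟩

/-- If a commutative `ℤ`-algebra `R` verifies the star assumption, then so do the polynomial
ring `R[X]` and the formal power series ring `R[[X]]`. -/
theorem stmt_11 {R : Type*} [CommRing R] (hstar : StarAssumption R) :
    StarAssumption (Polynomial R) ∧ StarAssumption (PowerSeries R) := by
  constructor
  · intro S hS hinf
    rw [eq_bot_iff]
    intro f hf
    simp only [Ideal.mem_iInf, Ideal.mem_span_singleton] at hf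
    have : ∀ n, f.coeff n ∈ (⨅ p ∈ S, Ideal.span {(p : R)}) := by
      intro n
      simp only [Ideal.mem_iInf, Ideal.mem_span_singleton]
      intro p hp
      have := hf p hp
      rw [show ((p : ℕ) : Polynomial R) = Polynomial.C (p : R) by simp,
        Polynomial.C_dvd_iff_dvd_coeff] at this
      exact this n
    rw [hstar S hS hinf] at this
    simp only [Ideal.mem_bot] at this ⊢
    exact Polynomial.ext this
  · intro S hS hinf
    rw [eq_bot_iff]
    intro f hf
    simp only [Ideal.mem_iInf, Ideal.mem_span_singleton] at hf
    have : ∀ n, PowerSeries.coeff n f ∈ (⨅ p ∈ S, Ideal.span {(p : R)}) := by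
      intro n
      simp only [Ideal.mem_iInf, Ideal.mem_span_singleton]
      intro p hp
      have := hf p hp
      rw [show ((p : ℕ) : PowerSeries R) = PowerSeries.C (p : R) by simp,
        ps_C_dvd_iff] at this
      exact this n
    rw [hstar S hS hinf] at this
    simp only [Ideal.mem_bot] at this ⊢
    exact PowerSeries.ext this
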